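/- Let V and W be finite-dimensional real vector spaces and let P ⊆ V and Q ⊆ W be nonempty polytopes. Let C(P) := {a • (x,(1:ℝ)) : a ≥ 0, x ∈ P} ⊆ V × ℝ and C(Q) ⊆ W × ℝ be the cones over P and Q, and let C(P) ⊗ C(Q) ⊆ (V × ℝ) ⊗[ℝ] (W × ℝ) be their tensor product cone. Let φ : (V × ℝ) ⊗[ℝ] (W × ℝ) ≃ₗ[ℝ] ((V ⊗[ℝ] W) × V × W) × ℝ be the linear equivalence determined by φ((v,a) ⊗ (w,b)) = ((v ⊗ w, b • v, a • w), a·b). Then: (i) φ '' (C(P) ⊗ C(Q)) = C(P ⊗ Q), the cone over the tensor product polytope P ⊗ Q ⊆ (V ⊗[ℝ] W) × V × W; and (ii) the degree-one slice {z ∈ φ '' (C(P) ⊗ C(Q)) | the last (ℝ-)coordinate of z equals 1} equals (P ⊗ Q) × {1}. -/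

import Mathlib

open scoped BigOperators TensorProduct

/-- A polytope: the convex hull of a finite set of points. -/
def IsPolytope {V : Type*} [AddCommGroup V] [Module ℝ V] (P : Set V) : Prop :=
  ∃ F : Finset V, P = convexHull ℝ (F : Set V)

/-- The cone over a polytope `P ⊆ V`: the set of nonnegative multiples of
`P × {1}` in `V × ℝ`. -/
def coneOver {V : Type*} [AddCommGroup V] [Module ℝ V] (P : Set V) : Set (V × ℝ) :=
  {z | ∃ a : ℝ, 0 ≤ a ∧ ∃ x ∈ P, z = a • (x, (1 : ℝ))}

/-- The tensor product cone of two cones: all nonnegative linear combinations of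
elementary tensors `x ⊗ y` with `x ∈ C`, `y ∈ D`. -/
def tensorCone {V W : Type*} [AddCommGroup V] [Module ℝ V] [AddCommGroup W] [Module ℝ W]
    (C : Set V) (D : Set W) : Set (V ⊗[ℝ] W) :=
  {z | ∃ (n : ℕ) (c : Fin n → ℝ) (x : Fin n → V) (y : Fin n → W),
    (∀ i, 0 ≤ c i) ∧ (∀ i, x i ∈ C) ∧ (∀ i, y i ∈ D) ∧
      z = ∑ i, c i • (x i ⊗ₜ[ℝ] y i)}

/-- The tensor product of two polytopes `P ⊆ V` and `Q ⊆ W`: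
the convex hull of `{(x ⊗ y, x, y) : x a vertex of P, y a vertex of Q}`
in `(V ⊗[ℝ] W) × V × W`. -/
def tensorPolytope {V W : Type*} [AddCommGroup V] [Module ℝ V] [AddCommGroup W] [Module ℝ W]
    (P : Set V) (Q : Set W) : Set ((V ⊗[ℝ] W) × V × W) :=
  convexHull ℝ
    {p | ∃ x ∈ Set.extremePoints ℝ P, ∃ y ∈ Set.extremePoints ℝ Q,
      p = (x ⊗ₜ[ℝ] y, x, y)}

lemma polytope_km {V : Type*} [AddCommGroup V] [Module ℝ V] [FiniteDimensional ℝ V]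
    {P : Set V} (hP : IsPolytope P) :
    convexHull ℝ (Set.extremePoints ℝ P) = P ∧
      (P.Nonempty → (Set.extremePoints ℝ P).Nonempty) := by
  obtain ⟨F, rfl⟩ := hP
  let e : V ≃ₗ[ℝ] (Fin (Module.finrank ℝ V) → ℝ) := (Module.finBasis ℝ V).equivFun
  set s : Set (Fin (Module.finrank ℝ V) → ℝ) := ⇑e '' ↑F with hs
  have hsfin : s.Finite := F.finite_toSet.image e
  have hcomp : IsCompact (convexHull ℝ s) := hsfin.isCompact_convexHull ℝ
  have hextfin : (Set.extremePoints ℝ (convexHull ℝ s)).Finite :=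
    hsfin.subset extremePoints_convexHull_subset
  have hKM : convexHull ℝ (Set.extremePoints ℝ (convexHull ℝ s)) = convexHull ℝ s := by
    have h := closure_convexHull_extremePoints hcomp (convex_convexHull ℝ s)
    rwa [(hextfin.isClosed_convexHull ℝ).closure_eq] at h
  have himg : convexHull ℝ (F : Set V) = ⇑e.symm '' convexHull ℝ s := by
    rw [show ⇑e.symm = ⇑e.symm.toLinearMap from rfl, e.symm.toLinearMap.image_convexHull]
    congr 1
    rw [hs, ← Set.image_comp]
    simp
  have hext : Set.extremePoints ℝ (convexHull ℝ (F : Set V))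
      = ⇑e.symm '' Set.extremePoints ℝ (convexHull ℝ s) := by
    rw [himg, ← image_extremePoints e.symm]
  constructor
  · rw [hext, show ⇑e.symm = ⇑e.symm.toLinearMap from rfl,
      ← e.symm.toLinearMap.image_convexHull, hKM]
    exact himg.symm
  · intro hne
    rw [himg] at hne
    rw [hext]
    exact (hcomp.extremePoints_nonempty hne.of_image).image _

section Aux

variable {V W : Type*} [AddCommGroup V] [Module ℝ V] [AddCommGroup W] [Module ℝ W]

lemma mem_tensorPolytope {P : Set V} {Q : Set W}
    (hPc : convexHull ℝ (Set.extremePoints ℝ P) = P)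
    (hQc : convexHull ℝ (Set.extremePoints ℝ Q) = Q)
    {p : V} (hp : p ∈ P) {q : W} (hq : q ∈ Q) :
    ((p ⊗ₜ[ℝ] q, p, q) : (V ⊗[ℝ] W) × V × W) ∈ tensorPolytope P Q := by
  rw [← hPc, convexHull_eq] at hp
  rw [← hQc, convexHull_eq] at hq
  obtain ⟨ι, t, w, x, hw0, hw1, hxm, hx⟩ := hp
  obtain ⟨κ, u, ω, y, hω0, hω1, hym, hy⟩ := hq
  rw [Finset.centerMass_eq_of_sum_1 _ _ hw1] at hx
  rw [Finset.centerMass_eq_of_sum_1 _ _ hω1] at hy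
  have h1 : p ⊗ₜ[ℝ] q = ∑ ij ∈ t ×ˢ u, (w ij.1 * ω ij.2) • (x ij.1 ⊗ₜ[ℝ] y ij.2) := by
    rw [← hx, ← hy, Finset.sum_product, TensorProduct.sum_tmul]
    refine Finset.sum_congr rfl fun i _ => ?_
    rw [← TensorProduct.smul_tmul', TensorProduct.tmul_sum, Finset.smul_sum]
    exact Finset.sum_congr rfl fun k _ => by
      rw [TensorProduct.tmul_smul, smul_smul]
  have h2 : p = ∑ ij ∈ t ×ˢ u, (w ij.1 * ω ij.2) • x ij.1 := by
    rw [← hx, Finset.sum_product]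
    refine Finset.sum_congr rfl fun i _ => ?_
    have h : ∑ k ∈ u, (w i * ω k) • x i = w i • x i := by
      rw [← Finset.sum_smul, ← Finset.mul_sum, hω1, mul_one]
    exact h.symm
  have h3 : q = ∑ ij ∈ t ×ˢ u, (w ij.1 * ω ij.2) • y ij.2 := by
    rw [← hy, Finset.sum_product]
    have : ∀ i ∈ t, ∑ k ∈ u, (w i * ω k) • y k = w i • ∑ k ∈ u, ω k • y k := by
      intro i _
      rw [Finset.smul_sum]
      exact Finset.sum_congr rfl fun k _ => by rw [smul_smul]
    rw [Finset.sum_congr rfl this, ← Finset.sum_smul, hw1, one_smul]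
  have key : ((p ⊗ₜ[ℝ] q, p, q) : (V ⊗[ℝ] W) × V × W) =
      ∑ ij ∈ t ×ˢ u, (w ij.1 * ω ij.2) •
        ((x ij.1 ⊗ₜ[ℝ] y ij.2, x ij.1, y ij.2) : (V ⊗[ℝ] W) × V × W) := by
    refine Prod.ext ?_ (Prod.ext ?_ ?_) <;>
      simp only [Prod.fst_sum, Prod.snd_sum, Prod.smul_mk, Prod.mk.injEq]
    · exact h1
    · exact h2
    · exact h3
  rw [key]
  refine (convex_convexHull ℝ _).sum_mem
    (fun ij _ => mul_nonneg (hw0 _ (Finset.mem_product.1 ‹_›).1) (hω0 _ (Finset.mem_product.1 ‹_›).2))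
    ?_ fun ij hij => subset_convexHull ℝ _ ?_
  · rw [Finset.sum_product, ← Finset.sum_mul_sum, hw1, hω1, mul_one]
  · obtain ⟨hi, hk⟩ := Finset.mem_product.1 hij
    exact ⟨x ij.1, hxm _ hi, y ij.2, hym _ hk, rfl⟩

lemma sum_mem_coneOver {T : Set V} (hT : Convex ℝ T) (hTne : T.Nonempty)
    {ι : Type*} (t : Finset ι) (d : ι → ℝ) (m : ι → V)
    (hd : ∀ i ∈ t, 0 ≤ d i) (hm : ∀ i ∈ t, m i ∈ T) :
    (∑ i ∈ t, d i • ((m i, (1:ℝ)) : V × ℝ)) ∈ coneOver T := by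
  rcases eq_or_lt_of_le (Finset.sum_nonneg hd) with hzero | hpos
  · have hz : ∀ i ∈ t, d i = 0 := (Finset.sum_eq_zero_iff_of_nonneg hd).1 hzero.symm
    obtain ⟨x0, hx0⟩ := hTne
    refine ⟨0, le_refl 0, x0, hx0, ?_⟩
    rw [zero_smul]
    exact Finset.sum_eq_zero fun i hi => by rw [hz i hi, zero_smul]
  · refine ⟨∑ i ∈ t, d i, le_of_lt hpos, t.centerMass d m, hT.centerMass_mem hd hpos hm, ?_⟩
    rw [Finset.centerMass]
    refine Prod.ext ?_ ?_
    · simp only [Prod.fst_sum, Prod.smul_mk, smul_smul, Prod.fst]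
      rw [mul_inv_cancel₀ hpos.ne', one_smul]
    · simp only [Prod.snd_sum, Prod.smul_mk, smul_eq_mul, mul_one]

lemma mem_tensorCone {C : Set V} {D : Set W} {ι : Type*} (t : Finset ι)
    (c : ι → ℝ) (x : ι → V) (y : ι → W)
    (hc : ∀ i ∈ t, 0 ≤ c i) (hx : ∀ i ∈ t, x i ∈ C) (hy : ∀ i ∈ t, y i ∈ D) :
    (∑ i ∈ t, c i • (x i ⊗ₜ[ℝ] y i)) ∈ tensorCone C D := by
  classical
  let e : Fin t.card ≃ {i // i ∈ t} := t.equivFin.symm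
  refine ⟨t.card, fun j => c (e j), fun j => x (e j), fun j => y (e j),
    fun j => hc _ (e j).2, fun j => hx _ (e j).2, fun j => hy _ (e j).2, ?_⟩
  rw [← Finset.sum_coe_sort t (fun i => c i • (x i ⊗ₜ[ℝ] y i))]
  exact (Fintype.sum_equiv e (fun j => c (e j) • (x (e j) ⊗ₜ[ℝ] y (e j)))
    (fun i => c i • (x i ⊗ₜ[ℝ] y i)) (fun j => rfl)).symm

end Aux

theorem stmt_17 {V W : Type*}
    [AddCommGroup V] [Module ℝ V] [FiniteDimensional ℝ V]
    [AddCommGroup W] [Module ℝ W] [FiniteDimensional ℝ W]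
    (P : Set V) (Q : Set W)
    (hP : IsPolytope P) (hPne : P.Nonempty)
    (hQ : IsPolytope Q) (hQne : Q.Nonempty)
    (φ : ((V × ℝ) ⊗[ℝ] (W × ℝ)) ≃ₗ[ℝ] ((V ⊗[ℝ] W) × V × W) × ℝ)
    (hφ : ∀ (v : V) (a : ℝ) (w : W) (b : ℝ),
      φ ((v, a) ⊗ₜ[ℝ] (w, b)) = ((v ⊗ₜ[ℝ] w, b • v, a • w), a * b)) :
    φ '' tensorCone (coneOver P) (coneOver Q) = coneOver (tensorPolytope P Q) ∧
    {z ∈ φ '' tensorCone (coneOver P) (coneOver Q) | z.2 = 1} =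
      (tensorPolytope P Q) ×ˢ ({1} : Set ℝ) := by
  obtain ⟨hPc, hPext⟩ := polytope_km hP
  obtain ⟨hQc, hQext⟩ := polytope_km hQ
  have hTconv : Convex ℝ (tensorPolytope P Q) := convex_convexHull ℝ _
  have hTne : (tensorPolytope P Q).Nonempty := by
    obtain ⟨p, hp⟩ := hPext hPne
    obtain ⟨q, hq⟩ := hQext hQne
    exact ⟨_, subset_convexHull ℝ _ ⟨p, hp, q, hq, rfl⟩⟩
  have hmain : φ '' tensorCone (coneOver P) (coneOver Q) = coneOver (tensorPolytope P Q) := by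
    apply Set.Subset.antisymm
    · rintro _ ⟨z, ⟨n, c, x, y, hc, hx, hy, rfl⟩, rfl⟩
      choose a ha0 p hp hxe using hx
      choose b hb0 q hq hye using hy
      have hφ' : ∀ i, φ (c i • (x i ⊗ₜ[ℝ] y i)) =
          (c i * (a i * b i)) • (((p i ⊗ₜ[ℝ] q i, p i, q i), (1:ℝ)) :
            ((V ⊗[ℝ] W) × V × W) × ℝ) := by
        intro i
        simp only [hxe i, hye i, ← TensorProduct.smul_tmul', TensorProduct.tmul_smul,
          map_smul, hφ, one_smul, mul_one, smul_smul]
        rw [mul_comm (b i) (a i)]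
      rw [map_sum, Finset.sum_congr rfl (fun i _ => hφ' i)]
      exact sum_mem_coneOver hTconv hTne Finset.univ _ _
        (fun i _ => mul_nonneg (hc i) (mul_nonneg (ha0 i) (hb0 i)))
        (fun i _ => mem_tensorPolytope hPc hQc (hp i) (hq i))
    · rintro _ ⟨s, hs0, uu, hu, rfl⟩
      rw [tensorPolytope, convexHull_eq] at hu
      obtain ⟨ι, t, w, m, hw0, hw1, hmS, rfl⟩ := hu
      classical
      choose! xv hxv yv hyv hmeq using hmS
      refine ⟨∑ i ∈ t, (s * w i) • (((xv i, (1:ℝ)) : V × ℝ) ⊗ₜ[ℝ] ((yv i, (1:ℝ)) : W × ℝ)),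
        mem_tensorCone t _ _ _ (fun i hi => mul_nonneg hs0 (hw0 i hi))
          (fun i hi => ⟨1, zero_le_one, xv i, extremePoints_subset (hxv i hi), by rw [one_smul]⟩)
          (fun i hi => ⟨1, zero_le_one, yv i, extremePoints_subset (hyv i hi), by rw [one_smul]⟩),
        ?_⟩
      rw [map_sum]
      have hterm : ∀ i ∈ t, φ ((s * w i) • (((xv i, (1:ℝ)) : V × ℝ) ⊗ₜ[ℝ] ((yv i, (1:ℝ)) : W × ℝ))) =
          (s * w i) • ((m i, (1:ℝ)) : ((V ⊗[ℝ] W) × V × W) × ℝ) := by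
        intro i hi
        rw [map_smul, hφ, hmeq i hi]
        simp only [one_smul, mul_one]
      rw [Finset.sum_congr rfl hterm, Finset.centerMass_eq_of_sum_1 _ _ hw1]
      refine Prod.ext ?_ ?_
      · simp only [Prod.fst_sum, Prod.smul_mk, Prod.fst, Finset.smul_sum, smul_smul]
      · simp only [Prod.snd_sum, Prod.smul_mk, smul_eq_mul, mul_one, ← Finset.mul_sum, hw1]
  refine ⟨hmain, ?_⟩
  ext z
  simp only [Set.mem_setOf_eq, Set.mem_prod, Set.mem_singleton_iff]
  constructor
  · rintro ⟨hz, hz2⟩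
    rw [hmain] at hz
    obtain ⟨s, hs0, u, hu, rfl⟩ := hz
    have hs1 : s = 1 := by simpa using hz2
    subst hs1
    rw [one_smul]
    exact ⟨hu, rfl⟩
  · rintro ⟨hz1, hz2⟩
    refine ⟨?_, hz2⟩
    rw [hmain]
    exact ⟨1, zero_le_one, z.1, hz1, by rw [one_smul]; exact Prod.ext rfl hz2⟩
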